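/- arXiv:0803.0829 — 4 statements merged into one kernel-verified Lean document; each statement's English description precedes it below -/
import Mathlib

section
/- With Q_n(x,t) = Γ_n(x, -t, -2!t, ..., -(n-1)!t), the recurrence Q_{n+1}(x,t) = x·Q_n(x,t) - n!·t·Σ_{j=0}^{n-1} Q_j(x,t)/j! holds for all n ≥ 1. -/
/-- Complete Bell polynomials via the standard recurrence (equivalent to the
exponential formula). -/
noncomputable def bellΓ (x : ℕ → ℝ) : ℕ → ℝ
  | 0 => 1
  | n + 1 => ∑ j ∈ (Finset.range (n + 1)).attach,
      (n.choose j.1 : ℝ) * bellΓ x j.1 * x (n + 1 - j.1)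
  decreasing_by exact Finset.mem_range.mp j.2

/-- `Q_n(x,t) = Γ_n(x, -1!t, -2!t, …, -(n-1)!t)`. -/
noncomputable def Q (x t : ℝ) (n : ℕ) : ℝ :=
  bellΓ (fun k => if k = 1 then x else -((k - 1).factorial : ℝ) * t) n

theorem Q_gamma_recurrence (x t : ℝ) (n : ℕ) (hn : 1 ≤ n) :
    Q x t (n + 1) =
      x * Q x t n - (n.factorial : ℝ) * t * ∑ j ∈ Finset.range n, Q x t j / j.factorial := by
  have h : Q x t (n+1) = ∑ j ∈ Finset.range (n + 1),
      (n.choose j : ℝ) * Q x t j * (if n + 1 - j = 1 then x else -(((n + 1 - j) - 1).factorial : ℝ) * t) := by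
    rw [Q, bellΓ, ← Finset.sum_attach (Finset.range (n+1))
      (fun j => (n.choose j : ℝ) * Q x t j * (if n + 1 - j = 1 then x else -(((n + 1 - j) - 1).factorial : ℝ) * t))]
    rfl
  rw [h, Finset.sum_range_succ]
  have h1 : n + 1 - n = 1 := by omega
  rw [h1]
  simp only [if_pos rfl, Nat.choose_self, Nat.cast_one, one_mul]
  have h2 : ∀ j ∈ Finset.range n,
      (n.choose j : ℝ) * Q x t j * (if n + 1 - j = 1 then x else -(((n + 1 - j) - 1).factorial : ℝ) * t)
      = -((n.factorial : ℝ) * t * (Q x t j / j.factorial)) := by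
    intro j hj
    rw [Finset.mem_range] at hj
    have hne : ¬ (n + 1 - j = 1) := by omega
    rw [if_neg hne]
    have h3 : n + 1 - j - 1 = n - j := by omega
    rw [h3]
    have h4 : (j.factorial : ℝ) ≠ 0 := by positivity
    have h5 : (n.choose j : ℝ) * (n - j).factorial * j.factorial = n.factorial := by
      rw [mul_right_comm]
      exact_mod_cast Nat.choose_mul_factorial_mul_factorial hj.le
    field_simp
    linear_combination (-(t * Q x t j)) * h5
  rw [Finset.sum_congr rfl h2, Finset.sum_neg_distrib, ← Finset.mul_sum]
  simp only [if_true]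
  ring
end

section
/- With Q_n(x,t) = Γ_n(x, -t, -2!t, ..., -(n-1)!t), one has Q_n(x,t) = (-1)^n n! L_n^{(t-n)}(x+t), where L_n^{(α)} denotes the generalized Laguerre polynomial. -/
/-- Generalized Laguerre polynomial `L_n^{(α)}(x) = ∑_{k=0}^n (-1)^k/k! ·
binom(n+α, n-k) · x^k`, where `binom(n+α, n-k) = ∏_{i=1}^{n-k} (α+k+i)/i`. -/
noncomputable def laguerre (n : ℕ) (α x : ℝ) : ℝ :=
  ∑ k ∈ Finset.range (n + 1),
    (-1 : ℝ) ^ k / k.factorial *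
      (∏ i ∈ Finset.range (n - k), (α + k + 1 + i) / (i + 1)) * x ^ k

/-- `bb t m = (-1)^m binom(t, m)`, the coefficients of `(1-w)^t`. -/
noncomputable def bb (t : ℝ) (m : ℕ) : ℝ :=
  (-1 : ℝ) ^ m * ∏ i ∈ Finset.range m, (t - i) / (i + 1)

/-- `SS x t n` is the coefficient of `w^n` in `e^{(x+t)w} (1-w)^t`. -/
noncomputable def SS (x t : ℝ) (n : ℕ) : ℝ :=
  ∑ k ∈ Finset.range (n + 1), (x + t) ^ k / k.factorial * bb t (n - k)

lemma bb_succ (t : ℝ) (m : ℕ) :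
    ((m : ℝ) + 1) * bb t (m + 1) = -(t - m) * bb t m := by
  simp only [bb, Finset.prod_range_succ, pow_succ]
  have h : ((m : ℝ) + 1) ≠ 0 := by positivity
  field_simp

lemma bb_sum (t : ℝ) (m : ℕ) :
    (m : ℝ) * bb t m = -t * ∑ j ∈ Finset.range m, bb t j := by
  induction m with
  | zero => simp
  | succ m ih =>
      rw [Finset.sum_range_succ]
      push_cast
      linear_combination bb_succ t m + ih

lemma triangle (x t : ℝ) (n : ℕ) :
    ∑ k ∈ Finset.range (n + 1), (x + t) ^ k / k.factorial *
        ∑ j ∈ Finset.range (n + 1 - k), bb t j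
      = ∑ m ∈ Finset.range (n + 1), SS x t m := by
  induction n with
  | zero => simp [SS]
  | succ n ih =>
      rw [Finset.sum_range_succ (f := fun m => SS x t m), ← ih,
        Finset.sum_range_succ]
      have h1 : ∑ k ∈ Finset.range (n + 1),
          (x + t) ^ k / k.factorial * ∑ j ∈ Finset.range (n + 1 + 1 - k), bb t j
          = ∑ k ∈ Finset.range (n + 1),
            ((x + t) ^ k / k.factorial * ∑ j ∈ Finset.range (n + 1 - k), bb t j
              + (x + t) ^ k / k.factorial * bb t (n + 1 - k)) := by
        refine Finset.sum_congr rfl fun k hk => ?_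
        have hk' : k ≤ n := Nat.lt_succ_iff.mp (Finset.mem_range.mp hk)
        have : n + 1 + 1 - k = (n + 1 - k) + 1 := by omega
        rw [this, Finset.sum_range_succ]
        ring
      rw [h1, Finset.sum_add_distrib]
      have h2 : SS x t (n + 1)
          = ∑ k ∈ Finset.range (n + 1), (x + t) ^ k / k.factorial * bb t (n + 1 - k)
            + (x + t) ^ (n + 1) / (n + 1).factorial * bb t 0 := by
        rw [SS, Finset.sum_range_succ]
        simp
      rw [h2]
      have h3 : n + 1 + 1 - (n + 1) = 1 := by omega
      rw [h3]
      simp [bb]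
      ring

lemma SS_rec (x t : ℝ) (n : ℕ) :
    ((n : ℝ) + 1) * SS x t (n + 1) =
      x * SS x t n - t * ∑ j ∈ Finset.range n, SS x t j := by
  have hsplit : ((n : ℝ) + 1) * SS x t (n + 1)
      = (∑ k ∈ Finset.range (n + 2), (k : ℝ) * ((x + t) ^ k / k.factorial) * bb t (n + 1 - k))
        + ∑ k ∈ Finset.range (n + 2),
            (x + t) ^ k / k.factorial * (((n + 1 - k : ℕ) : ℝ) * bb t (n + 1 - k)) := by
    rw [SS, Finset.mul_sum, ← Finset.sum_add_distrib]
    refine Finset.sum_congr rfl fun k hk => ?_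
    have hk' : k ≤ n + 1 := Nat.lt_succ_iff.mp (Finset.mem_range.mp hk)
    have hc : ((n + 1 - k : ℕ) : ℝ) = (n : ℝ) + 1 - k := by
      push_cast [Nat.cast_sub hk']; ring
    rw [hc]; ring
  rw [hsplit]
  have hA : (∑ k ∈ Finset.range (n + 2), (k : ℝ) * ((x + t) ^ k / k.factorial) * bb t (n + 1 - k))
      = (x + t) * SS x t n := by
    rw [Finset.sum_range_succ', SS, Finset.mul_sum]
    simp only [Nat.cast_zero, zero_mul, add_zero]
    refine Finset.sum_congr rfl fun k hk => ?_
    have h1 : n + 1 - (k + 1) = n - k := by omega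
    have h2 : ((k + 1 : ℕ).factorial : ℝ) = ((k : ℝ) + 1) * k.factorial := by
      push_cast [Nat.factorial_succ]; ring
    have h3 : (k.factorial : ℝ) ≠ 0 := Nat.cast_ne_zero.mpr k.factorial_ne_zero
    have h4 : ((k : ℝ) + 1) ≠ 0 := by positivity
    rw [h1]
    push_cast
    field_simp [h2]
    rw [h2]
    ring
  have hB : (∑ k ∈ Finset.range (n + 2),
        (x + t) ^ k / k.factorial * (((n + 1 - k : ℕ) : ℝ) * bb t (n + 1 - k)))
      = -t * (SS x t n + ∑ j ∈ Finset.range n, SS x t j) := by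
    have e1 : ∀ k ∈ Finset.range (n + 2),
        (x + t) ^ k / k.factorial * (((n + 1 - k : ℕ) : ℝ) * bb t (n + 1 - k))
        = -t * ((x + t) ^ k / k.factorial * ∑ j ∈ Finset.range (n + 1 - k), bb t j) := by
      intro k hk
      rw [bb_sum]; ring
    rw [Finset.sum_congr rfl e1, ← Finset.mul_sum, Finset.sum_range_succ]
    have h0 : n + 1 - (n + 1) = 0 := by omega
    rw [h0]
    simp only [Finset.range_zero, Finset.sum_empty, mul_zero, add_zero]
    rw [triangle, Finset.sum_range_succ]
    ring
  rw [hA, hB]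
  ring

lemma Q_eq_SS (x t : ℝ) (n : ℕ) : Q x t n = n.factorial * SS x t n := by
  induction n using Nat.strong_induction_on with
  | _ n ih =>
    match n with
    | 0 => simp [Q, bellΓ, SS, bb]
    | n + 1 =>
      have hQ : Q x t (n + 1) = ∑ j ∈ Finset.range (n + 1),
          (n.choose j : ℝ) * Q x t j *
            (if n + 1 - j = 1 then x else -(((n + 1 - j - 1).factorial : ℝ)) * t) := by
        rw [Q, bellΓ]
        rw [← Finset.sum_attach (Finset.range (n + 1)) (fun j =>
          (n.choose j : ℝ) * Q x t j *
            (if n + 1 - j = 1 then x else -(((n + 1 - j - 1).factorial : ℝ)) * t))]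
        rfl
      rw [hQ, Finset.sum_range_succ]
      have hlast : n + 1 - n = 1 := by omega
      rw [hlast]
      rw [if_pos rfl]
      simp only [Nat.choose_self, Nat.cast_one, one_mul]
      have hrest : ∀ j ∈ Finset.range n,
          (n.choose j : ℝ) * Q x t j *
            (if n + 1 - j = 1 then x else -(((n + 1 - j - 1).factorial : ℝ)) * t)
          = -(n.factorial : ℝ) * t * SS x t j := by
        intro j hj
        have hj' : j < n := Finset.mem_range.mp hj
        have h1 : n + 1 - j ≠ 1 := by omega
        have h2 : n + 1 - j - 1 = n - j := by omega
        rw [if_neg h1, h2, ih j (by omega)]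
        have h3 : (n.choose j : ℝ) * j.factorial * (n - j).factorial = n.factorial := by
          rw [← Nat.cast_mul, ← Nat.cast_mul, Nat.choose_mul_factorial_mul_factorial hj'.le]
        calc (n.choose j : ℝ) * ((j.factorial : ℝ) * SS x t j) * (-((n - j).factorial : ℝ) * t)
            = -((n.choose j : ℝ) * j.factorial * (n - j).factorial) * t * SS x t j := by ring
          _ = -(n.factorial : ℝ) * t * SS x t j := by rw [h3]
      rw [Finset.sum_congr rfl hrest, ih n (by omega)]
      have hms : ∑ j ∈ Finset.range n, -(n.factorial : ℝ) * t * SS x t j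
          = -(n.factorial : ℝ) * t * ∑ j ∈ Finset.range n, SS x t j := by
        rw [Finset.mul_sum]
      rw [hms]
      have hrec := SS_rec x t n
      have hfac : ((n + 1).factorial : ℝ) = ((n : ℝ) + 1) * n.factorial := by
        push_cast [Nat.factorial_succ]; ring
      rw [hfac]
      linear_combination (-(n.factorial : ℝ)) * hrec

lemma prodshift (t : ℝ) (m : ℕ) :
    ∏ i ∈ Finset.range m, (t - m + 1 + i) = ∏ i ∈ Finset.range m, (t - i) := by
  rw [← Finset.prod_range_reflect (fun i => t - i) m]
  refine Finset.prod_congr rfl fun i hi => ?_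
  have hi' : i < m := Finset.mem_range.mp hi
  have : ((m - 1 - i : ℕ) : ℝ) = (m : ℝ) - 1 - i := by
    have h1 : i ≤ m - 1 := by omega
    push_cast [Nat.cast_sub h1, Nat.cast_sub (by omega : 1 ≤ m)]
    ring
  rw [this]; ring

lemma laguerre_eq (x t : ℝ) (n : ℕ) :
    laguerre n (t - n) (x + t) = (-1 : ℝ) ^ n * SS x t n := by
  rw [laguerre, SS, Finset.mul_sum]
  refine Finset.sum_congr rfl fun k hk => ?_
  have hk' : k ≤ n := Nat.lt_succ_iff.mp (Finset.mem_range.mp hk)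
  set m := n - k with hm
  have hcast : ((m : ℕ) : ℝ) = (n : ℝ) - k := by
    push_cast [hm, Nat.cast_sub hk']; ring
  have hprod : ∏ i ∈ Finset.range m, (t - n + k + 1 + i) / (i + 1)
      = ∏ i ∈ Finset.range m, (t - i) / (i + 1) := by
    rw [Finset.prod_div_distrib, Finset.prod_div_distrib, ← prodshift t m]
    congr 1
    refine Finset.prod_congr rfl fun i _ => ?_
    rw [hcast]; ring
  rw [bb, show t - (n:ℝ) = t - n from rfl, hprod]
  have hsign : (-1 : ℝ) ^ n = (-1 : ℝ) ^ k * (-1 : ℝ) ^ m := by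
    rw [← pow_add, hm]
    congr 1
    omega
  have h1 : ((-1 : ℝ)) ^ m * (-1 : ℝ) ^ m = 1 := by
    rw [← pow_add]
    exact Even.neg_one_pow ⟨m, rfl⟩
  rw [hsign]
  linear_combination (-((x + t) ^ k * (-1 : ℝ) ^ k / k.factorial *
    ∏ i ∈ Finset.range m, (t - i) / (i + 1))) * h1

theorem Q_gamma_eq_laguerre (x t : ℝ) (n : ℕ) :
    Q x t n = (-1 : ℝ) ^ n * n.factorial * laguerre n (t - n) (x + t) := by
  rw [Q_eq_SS, laguerre_eq]
  have h1 : ((-1 : ℝ)) ^ n * (-1 : ℝ) ^ n = 1 := by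
    rw [← pow_add]
    exact Even.neg_one_pow ⟨n, rfl⟩
  linear_combination (-(n.factorial : ℝ) * SS x t n) * h1
end

section
/- For a standard Brownian motion W, for every n ≥ 1 and 0 ≤ s ≤ t, the conditional expectation E[H̃_n(W_t, t) | F_s] = H̃_n(W_s, s), where F is the natural filtration of W; i.e., H̃_n(W_t, t) is a martingale. -/
open MeasureTheory ProbabilityTheory
open scoped NNReal

/-- Monic Hermite polynomials, `exp(ux - tu²/2) = ∑ H̃_n(x,t) uⁿ/n!`, via the
equivalent three-term recurrence. -/
noncomputable def hermiteM : ℕ → ℝ → ℝ → ℝ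
  | 0, _, _ => 1
  | 1, x, _ => x
  | n + 2, x, t => x * hermiteM (n + 1) x t - (n + 1) * t * hermiteM n x t

lemma hermiteM_succ' (n : ℕ) (x t : ℝ) :
    hermiteM (n + 1) x t = x * hermiteM n x t - n * t * hermiteM (n - 1) x t := by
  cases n with
  | zero => simp [hermiteM]
  | succ m => simp [hermiteM]

noncomputable def hermPoly (t : ℝ) : ℕ → Polynomial ℝ
  | 0 => 1
  | 1 => Polynomial.X
  | n + 2 => Polynomial.X * hermPoly t (n + 1) - Polynomial.C ((n + 1) * t) * hermPoly t n

lemma hermPoly_succ' (t : ℝ) (n : ℕ) :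
    hermPoly t (n + 1) = Polynomial.X * hermPoly t n
      - Polynomial.C ((n : ℝ) * t) * hermPoly t (n - 1) := by
  cases n with
  | zero => simp [hermPoly]
  | succ m => simp [hermPoly]

lemma hermiteM_eval (n : ℕ) (x t : ℝ) : hermiteM n x t = (hermPoly t n).eval x := by
  induction n using Nat.strong_induction_on with
  | _ n ih =>
    match n with
    | 0 => simp [hermiteM, hermPoly]
    | 1 => simp [hermiteM, hermPoly]
    | (m + 2) =>
      simp only [hermiteM, hermPoly, Polynomial.eval_sub, Polynomial.eval_mul,
        Polynomial.eval_X, Polynomial.eval_C, ih (m + 1) (by omega), ih m (by omega)]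

lemma hermPoly_derivative (t : ℝ) (n : ℕ) :
    (hermPoly t n).derivative = Polynomial.C (n : ℝ) * hermPoly t (n - 1) := by
  induction n using Nat.strong_induction_on with
  | _ n ih =>
    match n with
    | 0 => simp [hermPoly]
    | 1 => simp [hermPoly]
    | (m + 2) =>
      have h1 := ih (m + 1) (by omega)
      have h2 := ih m (by omega)
      simp only [hermPoly, Polynomial.derivative_sub, Polynomial.derivative_mul,
        Polynomial.derivative_X, Polynomial.derivative_C, one_mul, zero_mul, zero_add, h1, h2]
      have hrec := hermPoly_succ' t m
      push_cast at hrec ⊢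
      rw [show (m + 1 : ℕ) - 1 = m from rfl] at *
      rw [hrec]
      simp only [map_add, map_mul, map_one, map_ofNat]
      ring

open Real Filter
open scoped ENNReal

lemma integrable_poly_mul_exp_neg_mul_sq {b : ℝ} (hb : 0 < b) (p : Polynomial ℝ) :
    Integrable (fun x : ℝ => p.eval x * Real.exp (-b * x ^ 2)) := by
  have hrw : (fun x : ℝ => p.eval x * Real.exp (-b * x ^ 2))
      = fun x => ∑ i ∈ Finset.range (p.natDegree + 1),
          p.coeff i * (x ^ i * Real.exp (-b * x ^ 2)) := by
    funext x
    rw [Polynomial.eval_eq_sum_range, Finset.sum_mul]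
    exact Finset.sum_congr rfl fun i _ => by ring
  rw [hrw]
  refine integrable_finset_sum _ fun i _ => Integrable.const_mul ?_ _
  have := integrable_rpow_mul_exp_neg_mul_sq hb (s := (i : ℝ))
    (lt_of_lt_of_le (by norm_num) (Nat.cast_nonneg i))
  simpa [Real.rpow_natCast] using this

lemma gaussianPDFReal_zero_eq (v : ℝ≥0) (x : ℝ) :
    gaussianPDFReal 0 v x
      = (Real.sqrt (2 * π * v))⁻¹ * Real.exp (-(2 * (v : ℝ))⁻¹ * x ^ 2) := by
  rw [gaussianPDFReal]
  congr 2
  rw [sub_zero]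
  ring

lemma integrable_poly_mul_gaussianPDFReal {v : ℝ≥0} (hv : v ≠ 0) (p : Polynomial ℝ) :
    Integrable (fun x : ℝ => p.eval x * gaussianPDFReal 0 v x) := by
  have hv0 : (0 : ℝ) < (v : ℝ) := by
    exact_mod_cast pos_iff_ne_zero.mpr hv
  have hb : (0 : ℝ) < (2 * (v : ℝ))⁻¹ := by positivity
  have key := (integrable_poly_mul_exp_neg_mul_sq hb p).const_mul ((Real.sqrt (2 * π * v))⁻¹)
  refine key.congr (Eventually.of_forall fun x => ?_)
  dsimp only
  rw [gaussianPDFReal_zero_eq]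
  ring

lemma stein_poly {v : ℝ≥0} (hv : v ≠ 0) (p : Polynomial ℝ) :
    ∫ x : ℝ, (x * p.eval x) * gaussianPDFReal 0 v x
      = (v : ℝ) * ∫ x : ℝ, p.derivative.eval x * gaussianPDFReal 0 v x := by
  have hv0 : (0 : ℝ) < (v : ℝ) := by
    exact_mod_cast pos_iff_ne_zero.mpr hv
  set b : ℝ := (2 * (v : ℝ))⁻¹ with hbdef
  have hb : 0 < b := by positivity
  set c : ℝ := (Real.sqrt (2 * π * v))⁻¹ with hcdef
  set F : ℝ → ℝ := fun x => (-(v : ℝ) * c) * (p.eval x * Real.exp (-b * x ^ 2)) with hF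
  set G : ℝ → ℝ := fun x =>
    (x * p.eval x) * gaussianPDFReal 0 v x
      - (v : ℝ) * (p.derivative.eval x * gaussianPDFReal 0 v x) with hG
  have hderiv : ∀ x, HasDerivAt F (G x) x := by
    intro x
    have h1 : HasDerivAt (fun y : ℝ => p.eval y) (p.derivative.eval x) x := p.hasDerivAt x
    have h2 : HasDerivAt (fun y : ℝ => Real.exp (-b * y ^ 2))
        (Real.exp (-b * x ^ 2) * (-b * (2 * x))) x := by
      have hx : HasDerivAt (fun y : ℝ => -b * y ^ 2) (-b * (2 * x)) x := by
        simpa [mul_comm] using ((hasDerivAt_pow 2 x).const_mul (-b))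
      exact hx.exp
    have h3 := (h1.mul h2).const_mul (-(v : ℝ) * c)
    convert h3 using 1
    case e'_4 => rfl
    case e'_5 => rfl
    case e'_8 => rfl
    simp only [hG, gaussianPDFReal_zero_eq, ← hbdef, ← hcdef]
    have h2v : (2 * (v : ℝ)) ≠ 0 := by positivity
    have h2vb : 2 * (v : ℝ) * b = 1 := by rw [hbdef]; exact mul_inv_cancel₀ h2v
    linear_combination (-(x * Polynomial.eval x p * c * Real.exp (-b * x ^ 2))) * h2vb
  have hGint : Integrable G := by
    have i1 : Integrable (fun x : ℝ => ((Polynomial.X * p).eval x) * gaussianPDFReal 0 v x) :=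
      integrable_poly_mul_gaussianPDFReal hv _
    have i2 := (integrable_poly_mul_gaussianPDFReal hv p.derivative).const_mul (v : ℝ)
    refine (i1.sub i2).congr (Eventually.of_forall fun x => ?_)
    simp [hG]
  have hFint : Integrable F :=
    (integrable_poly_mul_exp_neg_mul_sq hb p).const_mul (-(v : ℝ) * c)
  have hzero : ∫ x, G x = 0 := integral_eq_zero_of_hasDerivAt_of_integrable hderiv hGint hFint
  have hsub : ∫ x, G x = (∫ x : ℝ, (x * p.eval x) * gaussianPDFReal 0 v x)
      - ∫ x : ℝ, (v : ℝ) * (p.derivative.eval x * gaussianPDFReal 0 v x) := by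
    refine integral_sub ?_ ?_
    · exact (integrable_poly_mul_gaussianPDFReal hv (Polynomial.X * p)).congr
        (Eventually.of_forall fun x => by simp)
    · exact (integrable_poly_mul_gaussianPDFReal hv p.derivative).const_mul _
  rw [hzero, integral_const_mul] at hsub
  linarith [hsub]

lemma integral_gaussianReal_eq {v : ℝ≥0} (hv : v ≠ 0) (f : ℝ → ℝ) :
    ∫ x, f x ∂(gaussianReal 0 v) = ∫ x, f x * gaussianPDFReal 0 v x := by
  rw [gaussianReal_of_var_ne_zero 0 hv]
  have hid : (gaussianPDF 0 v) = fun x => ((gaussianPDFReal 0 v x).toNNReal : ℝ≥0∞) := rfl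
  rw [hid, integral_withDensity_eq_integral_smul
    ((measurable_gaussianPDFReal 0 v).real_toNNReal) f]
  refine integral_congr_ae (Eventually.of_forall fun x => ?_)
  simp only [NNReal.smul_def, Real.coe_toNNReal _ (gaussianPDFReal_nonneg 0 v x), smul_eq_mul]
  ring

lemma integrable_poly_gaussianReal (v : ℝ≥0) (p : Polynomial ℝ) :
    Integrable (fun x => p.eval x) (gaussianReal 0 v) := by
  by_cases hv : v = 0
  · subst hv
    rw [gaussianReal_zero_var]
    exact (integrable_const (p.eval 0)).congr
      (ae_eq_dirac' (p.continuous.measurable)).symm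
  · rw [gaussianReal_of_var_ne_zero 0 hv, integrable_withDensity_iff (measurable_gaussianPDF 0 v)
      (ae_of_all _ fun x => ENNReal.ofReal_lt_top)]
    refine (integrable_poly_mul_gaussianPDFReal hv p).congr (Eventually.of_forall fun x => ?_)
    dsimp only [gaussianPDF]
    rw [ENNReal.toReal_ofReal (gaussianPDFReal_nonneg 0 v x)]

lemma integral_hermiteM_gaussianReal (v : ℝ≥0) (m : ℕ) :
    ∫ x, hermiteM (m + 1) x (v : ℝ) ∂(gaussianReal 0 v) = 0 := by
  by_cases hv : v = 0
  · subst hv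
    rw [gaussianReal_zero_var, integral_dirac]
    rw [hermiteM_succ']
    simp
  · rw [integral_gaussianReal_eq hv]
    have heq : ∀ x : ℝ, hermiteM (m + 1) x (v : ℝ)
        = x * (hermPoly (v : ℝ) m).eval x
          - (v : ℝ) * ((Polynomial.C (m : ℝ) * hermPoly (v : ℝ) (m - 1)).eval x) := by
      intro x
      rw [hermiteM_eval, hermPoly_succ']
      simp only [Polynomial.eval_sub, Polynomial.eval_mul, Polynomial.eval_X, Polynomial.eval_C]
      ring
    have hsplit : ∫ x, hermiteM (m + 1) x (v : ℝ) * gaussianPDFReal 0 v x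
        = (∫ x : ℝ, (x * (hermPoly (v : ℝ) m).eval x) * gaussianPDFReal 0 v x)
          - ∫ x : ℝ, (v : ℝ) * (((Polynomial.C (m : ℝ) * hermPoly (v : ℝ) (m - 1)).eval x)
              * gaussianPDFReal 0 v x) := by
      rw [← integral_sub]
      · refine integral_congr_ae (Eventually.of_forall fun x => ?_)
        dsimp only
        rw [heq x]
        ring
      · exact (integrable_poly_mul_gaussianPDFReal hv (Polynomial.X * hermPoly (v : ℝ) m)).congr
          (Eventually.of_forall fun x => by simp)
      · exact ((integrable_poly_mul_gaussianPDFReal hv _).const_mul _)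
    rw [hsplit, stein_poly hv, hermPoly_derivative, integral_const_mul]
    ring

open Finset in
lemma hermiteM_add_add (x y a b : ℝ) (n : ℕ) :
    hermiteM n (x + y) (a + b)
      = ∑ k ∈ range (n + 1), (n.choose k : ℝ) * hermiteM k x a * hermiteM (n - k) y b := by
  induction n using Nat.strong_induction_on with
  | _ n ih =>
    match n with
    | 0 => simp [hermiteM]
    | 1 => simp [hermiteM, Finset.sum_range_succ]; ring
    | (m + 2) =>
      have e1 : hermiteM (m + 2) (x + y) (a + b)
          = (x + y) * hermiteM (m + 1) (x + y) (a + b)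
            - ((m : ℝ) + 1) * (a + b) * hermiteM m (x + y) (a + b) := by
        simp [hermiteM]
      rw [e1, ih (m + 1) (by omega), ih m (by omega)]
      have hsub : ∀ k : ℕ, m + 2 - (k + 1) = m + 1 - k := fun k => by omega
      have hsub2 : ∀ k : ℕ, m + 1 - (k + 1) = m - k := fun k => by omega
      have hkey : ∀ j : ℕ, (j + 1) * (m + 1).choose (j + 1) = (m + 1) * m.choose j := by
        intro j
        rw [mul_comm]
        exact (Nat.add_one_mul_choose_eq m j).symm
      have hA : ∑ k ∈ range (m + 2 + 1), ((m + 2).choose k : ℝ) * hermiteM k x a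
            * hermiteM (m + 2 - k) y b
          = (∑ i ∈ range (m + 2), ((m + 1).choose i : ℝ) * hermiteM (i + 1) x a
              * hermiteM (m + 1 - i) y b)
            + ∑ k ∈ range (m + 2 + 1), ((m + 1).choose k : ℝ) * hermiteM k x a
              * hermiteM (m + 2 - k) y b := by
        rw [Finset.sum_range_succ' _ (m + 2), Finset.sum_range_succ'
          (fun k => ((m + 1).choose k : ℝ) * hermiteM k x a * hermiteM (m + 2 - k) y b) (m + 2)]
        simp only [hsub]
        have key : ∑ k ∈ range (m + 2), ((m + 2).choose (k + 1) : ℝ) * hermiteM (k + 1) x a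
              * hermiteM (m + 1 - k) y b
            = (∑ i ∈ range (m + 2), ((m + 1).choose i : ℝ) * hermiteM (i + 1) x a
                * hermiteM (m + 1 - i) y b)
              + ∑ k ∈ range (m + 2), ((m + 1).choose (k + 1) : ℝ) * hermiteM (k + 1) x a
                * hermiteM (m + 1 - k) y b := by
          rw [← Finset.sum_add_distrib]
          refine Finset.sum_congr rfl fun i _ => ?_
          rw [Nat.choose_succ_succ]
          push_cast
          ring
        rw [key]
        push_cast [Nat.choose_zero_right]
        ring
      rw [hA]
      have hB : ∑ k ∈ range (m + 2 + 1), ((m + 1).choose k : ℝ) * hermiteM k x a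
            * hermiteM (m + 2 - k) y b
          = ∑ k ∈ range (m + 2), ((m + 1).choose k : ℝ) * hermiteM k x a
            * hermiteM (m + 2 - k) y b := by
        rw [Finset.sum_range_succ, Nat.choose_eq_zero_of_lt (by omega)]
        simp
      rw [hB]
      have hC : ∑ i ∈ range (m + 2), ((m + 1).choose i : ℝ) * hermiteM (i + 1) x a
            * hermiteM (m + 1 - i) y b
          = x * (∑ i ∈ range (m + 2), ((m + 1).choose i : ℝ) * hermiteM i x a
              * hermiteM (m + 1 - i) y b)
            - ((m : ℝ) + 1) * a * ∑ j ∈ range (m + 1), (m.choose j : ℝ) * hermiteM j x a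
              * hermiteM (m - j) y b := by
        have step : ∀ i ∈ range (m + 2), ((m + 1).choose i : ℝ) * hermiteM (i + 1) x a
              * hermiteM (m + 1 - i) y b
            = x * (((m + 1).choose i : ℝ) * hermiteM i x a * hermiteM (m + 1 - i) y b)
              - a * (((i * (m + 1).choose i : ℕ) : ℝ) * hermiteM (i - 1) x a
                * hermiteM (m + 1 - i) y b) := by
          intro i _
          rw [hermiteM_succ']
          push_cast
          ring
        rw [Finset.sum_congr rfl step, Finset.sum_sub_distrib, ← Finset.mul_sum, ← Finset.mul_sum]
        congr 1
        rw [Finset.sum_range_succ'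
          (fun i => (((i * (m + 1).choose i : ℕ) : ℝ) * hermiteM (i - 1) x a
            * hermiteM (m + 1 - i) y b)) (m + 1)]
        simp only [hsub, Nat.add_sub_cancel, Nat.zero_mul, Nat.cast_zero, zero_mul, add_zero,
          Nat.sub_zero]
        rw [Finset.mul_sum, Finset.mul_sum]
        refine Finset.sum_congr rfl fun j _ => ?_
        rw [hkey j, hsub2]
        push_cast
        ring
      have hD : ∑ k ∈ range (m + 2), ((m + 1).choose k : ℝ) * hermiteM k x a
            * hermiteM (m + 2 - k) y b
          = y * (∑ k ∈ range (m + 2), ((m + 1).choose k : ℝ) * hermiteM k x a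
              * hermiteM (m + 1 - k) y b)
            - ((m : ℝ) + 1) * b * ∑ j ∈ range (m + 1), (m.choose j : ℝ) * hermiteM j x a
              * hermiteM (m - j) y b := by
        have step : ∀ k ∈ range (m + 2), ((m + 1).choose k : ℝ) * hermiteM k x a
              * hermiteM (m + 2 - k) y b
            = y * (((m + 1).choose k : ℝ) * hermiteM k x a * hermiteM (m + 1 - k) y b)
              - b * ((((m + 1 - k) * (m + 1).choose k : ℕ) : ℝ) * hermiteM k x a
                * hermiteM (m - k) y b) := by
          intro k hk
          have h2 : m + 2 - k = (m + 1 - k) + 1 := by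
            have := Finset.mem_range.mp hk; omega
          have h3 : (m + 1 - k) - 1 = m - k := by omega
          rw [h2, hermiteM_succ', h3]
          push_cast
          ring
        rw [Finset.sum_congr rfl step, Finset.sum_sub_distrib, ← Finset.mul_sum, ← Finset.mul_sum]
        congr 1
        rw [Finset.sum_range_succ]
        simp only [Nat.sub_self, Nat.zero_mul, Nat.cast_zero, zero_mul, add_zero]
        rw [Finset.mul_sum, Finset.mul_sum]
        refine Finset.sum_congr rfl fun j hj => ?_
        have hj' : j ≤ m := Nat.lt_succ_iff.mp (Finset.mem_range.mp hj)
        have hid : (m + 1 - j) * (m + 1).choose j = (m + 1) * m.choose j :=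
          calc (m + 1 - j) * (m + 1).choose j = (m + 1).choose j * (m + 1 - j) := mul_comm _ _
            _ = (m + 1).choose (j + 1) * (j + 1) := (Nat.choose_succ_right_eq (m + 1) j).symm
            _ = (j + 1) * (m + 1).choose (j + 1) := mul_comm _ _
            _ = (m + 1) * m.choose j := hkey j
        rw [hid]
        push_cast
        ring
      rw [hC, hD]
      ring

lemma eventuallyEq_finset_sum' {α ι : Type*} {l : Filter α} (s : Finset ι) {f g : ι → α → ℝ}
    (h : ∀ i ∈ s, f i =ᶠ[l] g i) : (∑ i ∈ s, f i) =ᶠ[l] (∑ i ∈ s, g i) := by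
  have h' : ∀ᶠ x in l, ∀ i ∈ s, f i x = g i x := (Filter.eventually_all_finset s).mpr h
  filter_upwards [h'] with x hx
  simp only [Finset.sum_apply]
  exact Finset.sum_congr rfl fun i hi => hx i hi

/-- For a standard Brownian motion `W` (centered, `W 0 = 0`, independent Gaussian
increments `W t - W s ~ N(0, t-s)`), the process `H̃_n(W_t, t)` is a martingale with
respect to the natural filtration of `W`. -/
theorem hermite_of_brownian_is_martingale
    {Ω : Type*} {mΩ : MeasurableSpace Ω} (μ : Measure Ω) [IsProbabilityMeasure μ]
    (W : ℝ≥0 → Ω → ℝ) (hW : ∀ t, StronglyMeasurable (W t))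
    (h0 : ∀ᵐ ω ∂μ, W 0 ω = 0)
    (hgauss : ∀ s t : ℝ≥0, s ≤ t →
      Measure.map (fun ω => W t ω - W s ω) μ = gaussianReal 0 (t - s))
    (hindep : ∀ s t : ℝ≥0, s ≤ t →
      Indep (MeasurableSpace.comap (fun ω => W t ω - W s ω) (borel ℝ))
        (MeasureTheory.Filtration.natural W hW s) μ)
    (n : ℕ) (hn : 1 ≤ n) (s t : ℝ≥0) (hst : s ≤ t) :
    μ[fun ω => hermiteM n (W t ω) (t : ℝ) | MeasureTheory.Filtration.natural W hW s]
      =ᵐ[μ] fun ω => hermiteM n (W s ω) (s : ℝ) := by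
  classical
  set ℱ := MeasureTheory.Filtration.natural W hW with hFdef
  set Y : Ω → ℝ := fun ω => W t ω - W s ω with hYdef
  set v : ℝ≥0 := t - s with hvdef
  have hbe : (inferInstance : MeasurableSpace ℝ) = borel ℝ := BorelSpace.measurable_eq
  have hYmeas : Measurable Y := (hW t).measurable.sub (hW s).measurable
  have hYmap : Measure.map Y μ = gaussianReal 0 v := hgauss s t hst
  have hWsmap : Measure.map (W s) μ = gaussianReal 0 s := by
    have h0' : (fun ω => W s ω - W 0 ω) =ᵐ[μ] W s := by
      filter_upwards [h0] with ω hω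
      rw [hω, sub_zero]
    rw [← Measure.map_congr h0', hgauss 0 s zero_le, tsub_zero]
  have hvreal : (t : ℝ) = (s : ℝ) + (v : ℝ) := by
    rw [hvdef, NNReal.coe_sub hst]; ring
  have hWs_sm : StronglyMeasurable[ℱ s] (W s) := Filtration.stronglyAdapted_natural hW s
  have hYc : @Measurable Ω ℝ (MeasurableSpace.comap Y (borel ℝ)) (borel ℝ) Y :=
    fun u hu => ⟨u, hu, rfl⟩
  -- integrability and integral value for polynomial functions of a gaussian variable
  have key_int : ∀ (X : Ω → ℝ) (w : ℝ≥0), Measurable X → Measure.map X μ = gaussianReal 0 w →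
      ∀ m : ℕ, Integrable (fun ω => hermiteM m (X ω) (w : ℝ)) μ := by
    intro X w hX hmap m
    have h1 : Integrable (fun x => (hermPoly (w : ℝ) m).eval x) (gaussianReal 0 w) :=
      integrable_poly_gaussianReal w _
    rw [← hmap] at h1
    have h2 := (integrable_map_measure
      ((hermPoly (w : ℝ) m).continuous.measurable.aestronglyMeasurable)
      hX.aemeasurable).mp h1
    refine h2.congr (Filter.Eventually.of_forall fun ω => ?_)
    simp only [Function.comp_apply, hermiteM_eval]
  have key_integral : ∀ (X : Ω → ℝ) (w : ℝ≥0), Measurable X →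
      Measure.map X μ = gaussianReal 0 w →
      ∀ m : ℕ, ∫ ω, hermiteM m (X ω) (w : ℝ) ∂μ = ∫ x, hermiteM m x (w : ℝ) ∂(gaussianReal 0 w) := by
    intro X w hX hmap m
    have : ∫ x, hermiteM m x (w : ℝ) ∂(gaussianReal 0 w)
        = ∫ x, (hermPoly (w : ℝ) m).eval x ∂(gaussianReal 0 w) := by
      refine integral_congr_ae (Filter.Eventually.of_forall fun x => ?_)
      dsimp only
      rw [hermiteM_eval]
    rw [this, ← hmap, integral_map hX.aemeasurable
      ((hermPoly (w : ℝ) m).continuous.measurable.aestronglyMeasurable)]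
    refine integral_congr_ae (Filter.Eventually.of_forall fun ω => ?_)
    dsimp only [Function.comp_apply]
    rw [hermiteM_eval]
  -- the summands
  set F : ℕ → Ω → ℝ := fun k ω =>
    ((n.choose k : ℝ) * hermiteM k (W s ω) (s : ℝ)) * hermiteM (n - k) (Y ω) (v : ℝ) with hFk
  have step0 : (fun ω => hermiteM n (W t ω) (t : ℝ)) = ∑ k ∈ Finset.range (n + 1), F k := by
    funext ω
    rw [Finset.sum_apply]
    have hx : W t ω = W s ω + Y ω := by simp [hYdef]
    rw [hx, hvreal, hermiteM_add_add]
  -- measurability of the factors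
  have hfk_meas : ∀ k : ℕ, Measurable[ℱ s] (fun ω => (n.choose k : ℝ) * hermiteM k (W s ω) (s : ℝ)) := by
    intro k
    have h1 : Measurable[ℱ s] (fun ω => (hermPoly (s : ℝ) k).eval (W s ω)) :=
      (hermPoly (s : ℝ) k).continuous.measurable.comp hWs_sm.measurable
    have h2 : Measurable[ℱ s] (fun ω => hermiteM k (W s ω) (s : ℝ)) := by
      simpa only [hermiteM_eval] using h1
    exact h2.const_mul _
  have hgk_meas : ∀ m : ℕ,
      Measurable[MeasurableSpace.comap Y (borel ℝ)] (fun ω => hermiteM m (Y ω) (v : ℝ)) := by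
    intro m
    have hφ : @Measurable ℝ ℝ (borel ℝ) _ (fun z => (hermPoly (v : ℝ) m).eval z) := by
      rw [← hbe]
      exact (hermPoly (v : ℝ) m).continuous.measurable
    have h1 : Measurable[MeasurableSpace.comap Y (borel ℝ)]
        (fun ω => (hermPoly (v : ℝ) m).eval (Y ω)) := hφ.comp hYc
    simpa only [hermiteM_eval] using h1
  -- independence of factors
  have hind : Indep (MeasurableSpace.comap Y (borel ℝ)) (ℱ s) μ := hindep s t hst
  have hIF : ∀ k : ℕ, IndepFun (fun ω => hermiteM (n - k) (Y ω) (v : ℝ))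
      (fun ω => (n.choose k : ℝ) * hermiteM k (W s ω) (s : ℝ)) μ := by
    intro k
    have hle1 : MeasurableSpace.comap (fun ω => hermiteM (n - k) (Y ω) (v : ℝ)) inferInstance
        ≤ MeasurableSpace.comap Y (borel ℝ) := (hgk_meas (n - k)).comap_le
    have hle2 : MeasurableSpace.comap
        (fun ω => (n.choose k : ℝ) * hermiteM k (W s ω) (s : ℝ)) inferInstance
        ≤ ℱ s := (hfk_meas k).comap_le
    exact indep_of_indep_of_le_right (indep_of_indep_of_le_left hind hle1) hle2
  have hint_fk : ∀ k : ℕ, Integrable (fun ω => (n.choose k : ℝ) * hermiteM k (W s ω) (s : ℝ)) μ :=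
    fun k => (key_int (W s) s (hW s).measurable hWsmap k).const_mul _
  have hint_gk : ∀ m : ℕ, Integrable (fun ω => hermiteM m (Y ω) (v : ℝ)) μ :=
    fun m => key_int Y v hYmeas hYmap m
  have hint_F : ∀ k ∈ Finset.range (n + 1), Integrable (F k) μ := by
    intro k _
    have := ((hIF k).integrable_mul (hint_gk (n - k)) (hint_fk k))
    refine this.congr (Filter.Eventually.of_forall fun ω => ?_)
    simp only [hFk, Pi.mul_apply]
    ring
  -- conditional expectation of each summand
  have hle₁Y : MeasurableSpace.comap Y (borel ℝ) ≤ mΩ := by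
    rw [← hbe]
    exact hYmeas.comap_le
  have hck : ∀ k ∈ Finset.range (n + 1),
      μ[F k | ℱ s] =ᵐ[μ] fun ω => ((n.choose k : ℝ) * hermiteM k (W s ω) (s : ℝ))
        * ∫ ω', hermiteM (n - k) (Y ω') (v : ℝ) ∂μ := by
    intro k hk
    have h1 : μ[F k | ℱ s] =ᵐ[μ] (fun ω => (n.choose k : ℝ) * hermiteM k (W s ω) (s : ℝ))
        * μ[(fun ω => hermiteM (n - k) (Y ω) (v : ℝ)) | ℱ s] := by
      have := condExp_mul_of_stronglyMeasurable_left ((hfk_meas k).stronglyMeasurable)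
        (((hint_F k hk).congr (Filter.Eventually.of_forall fun ω => by
          simp only [hFk, Pi.mul_apply])))
        (hint_gk (n - k))
      exact this
    have h2 : μ[(fun ω => hermiteM (n - k) (Y ω) (v : ℝ)) | ℱ s]
        =ᵐ[μ] fun _ => ∫ ω', hermiteM (n - k) (Y ω') (v : ℝ) ∂μ :=
      condExp_indep_eq hle₁Y (ℱ.le s) ((hgk_meas (n - k)).stronglyMeasurable) hind
    refine h1.trans ?_
    filter_upwards [h2] with ω hω
    simp only [Pi.mul_apply, hω]
  -- value of the constants
  have hval0 : ∀ k, k < n → ∫ ω', hermiteM (n - k) (Y ω') (v : ℝ) ∂μ = 0 := by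
    intro k hkn
    have hnk : n - k = (n - k - 1) + 1 := by omega
    rw [key_integral Y v hYmeas hYmap, hnk, integral_hermiteM_gaussianReal]
  have hval1 : ∫ ω', hermiteM 0 (Y ω') (v : ℝ) ∂μ = 1 := by
    simp [hermiteM]
  -- put everything together
  rw [step0]
  refine (condExp_finsetSum hint_F _).trans ?_
  refine (eventuallyEq_finset_sum' (Finset.range (n + 1)) hck).trans ?_
  refine Filter.Eventually.of_forall fun ω => ?_
  rw [Finset.sum_apply]
  rw [Finset.sum_eq_single_of_mem n (Finset.self_mem_range_succ n)]
  · simp [hval1]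
  · intro k hk hkn
    have : k < n := by
      have := Finset.mem_range.mp hk
      omega
    simp [hval0 k this]
end

section
/- Define coefficients λ_k^{(n)} recursively by λ_1^{(n)} = 1 for all n ≥ 1 and λ_{k+1}^{(n)} = Σ_{j=k}^{n-1} C(n,j) λ_k^{(j)} for 1 ≤ k ≤ n-1. Then Γ_n(x, -t, ..., -t) = Σ_{j=1}^{n} λ_j^{(n)} · (1/j!)·C̃_j(x+t, t), where C̃_j are the monic Charlier polynomials defined by e^{-ut}(1+u)^x = Σ_{j≥0} C̃_j(x,t) u^j/j!. -/
/-- `lam k n = λ_k^{(n)}`, defined by `λ_1^{(n)} = 1` and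
`λ_{k+1}^{(n)} = ∑_{j=k}^{n-1} C(n,j) λ_k^{(j)}`. -/
noncomputable def lam : ℕ → ℕ → ℝ
  | 0, _ => 0
  | 1, _ => 1
  | k + 2, n => ∑ j ∈ Finset.Icc (k + 1) (n - 1), (n.choose j : ℝ) * lam (k + 1) j

/-- Monic Charlier polynomials `C̃_n(x,t)`, with generating function
`e^{-ut}(1+u)^x = ∑ C̃_n(x,t) uⁿ/n!`; explicitly
`C̃_n(x,t) = ∑_{k=0}^n C(n,k) (-t)^{n-k} (x)_k` with `(x)_k` the falling factorial. -/
noncomputable def charlierM (n : ℕ) (x t : ℝ) : ℝ :=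
  ∑ k ∈ Finset.range (n + 1),
    (n.choose k : ℝ) * (-t) ^ (n - k) * ∏ i ∈ Finset.range k, (x - i)


/-- Stirling numbers of the second kind, as reals. -/
noncomputable def stirS : ℕ → ℕ → ℝ
  | 0, 0 => 1
  | 0, _ + 1 => 0
  | _ + 1, 0 => 0
  | n + 1, k + 1 => stirS n k + (k + 1) * stirS n (k + 1)

lemma stirS_00 : stirS 0 0 = 1 := by rw [stirS]
lemma stirS_zero_left (k : ℕ) : stirS 0 (k + 1) = 0 := by rw [stirS]
lemma stirS_zr (n : ℕ) : stirS (n + 1) 0 = 0 := by rw [stirS]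
lemma stirS_succ (n k : ℕ) : stirS (n + 1) (k + 1) = stirS n k + (k + 1) * stirS n (k + 1) := by
  rw [stirS]

lemma stirS_eq_zero_of_lt : ∀ {n k : ℕ}, n < k → stirS n k = 0
  | 0, k + 1, _ => stirS_zero_left k
  | n + 1, k + 1, h => by
      have h1 : n < k := Nat.lt_of_succ_lt_succ h
      have h2 : n < k + 1 := Nat.lt_of_lt_of_le h1 (Nat.le_succ k)
      rw [stirS_succ, stirS_eq_zero_of_lt h1, stirS_eq_zero_of_lt h2]; ring

lemma stirS_one : ∀ n, stirS (n + 1) 1 = 1 := by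
  intro n
  induction n with
  | zero => rw [stirS_succ, stirS_00, stirS_zero_left]; ring
  | succ n ih => rw [stirS_succ, stirS_zr, ih]; ring

/-- `S(n+1, j+1) = ∑_{m=0}^{n} C(n,m) S(m,j)`. -/
lemma stirS_binom : ∀ (n j : ℕ),
    stirS (n + 1) (j + 1) = ∑ m ∈ Finset.range (n + 1), (n.choose m : ℝ) * stirS m j := by
  intro n
  induction n with
  | zero =>
      intro j
      rw [Finset.sum_range_one, stirS_succ]
      cases j with
      | zero => rw [stirS_00, stirS_zero_left]; norm_num
      | succ j => rw [stirS_zero_left, stirS_zero_left]; norm_num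
  | succ n ih =>
      intro j
      have hsplit : ∑ m ∈ Finset.range (n + 2), ((n + 1).choose m : ℝ) * stirS m j
          = (∑ m ∈ Finset.range (n + 1), ((n + 1).choose (m + 1) : ℝ) * stirS (m + 1) j)
            + ((n + 1).choose 0 : ℝ) * stirS 0 j := Finset.sum_range_succ' _ _
      have h2 : (∑ m ∈ Finset.range (n + 1), ((n + 1).choose (m + 1) : ℝ) * stirS (m + 1) j)
          = (∑ m ∈ Finset.range (n + 1), (n.choose m : ℝ) * stirS (m + 1) j)
            + (∑ m ∈ Finset.range (n + 1), (n.choose (m + 1) : ℝ) * stirS (m + 1) j) := by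
        rw [← Finset.sum_add_distrib]
        refine Finset.sum_congr rfl fun m _ => ?_
        rw [Nat.choose_succ_succ]; push_cast; ring
      have h3 : (∑ m ∈ Finset.range (n + 1), (n.choose (m + 1) : ℝ) * stirS (m + 1) j)
            + ((n + 1).choose 0 : ℝ) * stirS 0 j
          = ∑ m ∈ Finset.range (n + 2), (n.choose m : ℝ) * stirS m j := by
        rw [Finset.sum_range_succ' (fun m => (n.choose m : ℝ) * stirS m j) (n + 1)]
        norm_num
      have h4 : ∑ m ∈ Finset.range (n + 2), (n.choose m : ℝ) * stirS m j
          = ∑ m ∈ Finset.range (n + 1), (n.choose m : ℝ) * stirS m j := by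
        rw [Finset.sum_range_succ]
        simp [Nat.choose_succ_self]
      have key : ∑ m ∈ Finset.range (n + 2), ((n + 1).choose m : ℝ) * stirS m j
          = (∑ m ∈ Finset.range (n + 1), (n.choose m : ℝ) * stirS (m + 1) j)
            + stirS (n + 1) (j + 1) := by
        rw [hsplit, h2, add_assoc, h3, h4, ← ih j]
      rw [key]
      cases j with
      | zero =>
          have hz : (∑ m ∈ Finset.range (n + 1), (n.choose m : ℝ) * stirS (m + 1) 0) = 0 :=
            Finset.sum_eq_zero fun m _ => by rw [stirS_zr]; ring
          rw [hz, zero_add, stirS_succ, stirS_zr, stirS_one]; norm_num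
      | succ j =>
          have h5 : (∑ m ∈ Finset.range (n + 1), (n.choose m : ℝ) * stirS (m + 1) (j + 1))
              = (∑ m ∈ Finset.range (n + 1), (n.choose m : ℝ) * stirS m j)
                + (j + 1) * ∑ m ∈ Finset.range (n + 1), (n.choose m : ℝ) * stirS m (j + 1) := by
            rw [Finset.mul_sum, ← Finset.sum_add_distrib]
            refine Finset.sum_congr rfl fun m _ => ?_
            rw [stirS_succ]; push_cast; ring
          rw [h5, ← ih j, ← ih (j + 1), stirS_succ (n + 1) (j + 1), stirS_succ n (j + 1)]
          push_cast; ring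



lemma choose_id (n m : ℕ) (h : m + 1 ≤ n) :
    ((n : ℝ) - (m + 1)) * (n.choose (m + 1) : ℝ) = n * ((n - 1).choose (m + 1) : ℝ) := by
  obtain ⟨n', rfl⟩ : ∃ n', n = n' + 1 := ⟨n - 1, by omega⟩
  have h1 : (n' + 1) * n'.choose (m + 1) = (n' + 1).choose (m + 2) * (m + 2) :=
    Nat.add_one_mul_choose_eq n' (m + 1)
  have h2 : (n' + 1).choose (m + 2) * (m + 2) = (n' + 1).choose (m + 1) * ((n' + 1) - (m + 1)) :=
    Nat.choose_succ_right_eq (n' + 1) (m + 1)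
  have h3 : (n' + 1) * n'.choose (m + 1) = (n' + 1).choose (m + 1) * (n' - m) := by
    rw [h1, h2]; congr 1; omega
  have := congrArg (fun z : ℕ => (z : ℝ)) h3
  push_cast at this
  have hc : ((n' - m : ℕ) : ℝ) = (n' : ℝ) - m := by
    have : m ≤ n' := by omega
    push_cast [this]; ring
  rw [hc] at this
  simp only [Nat.add_sub_cancel]
  push_cast
  linarith [this]

lemma charlier_ext (y t : ℝ) (m N : ℕ) (h : m < N) :
    charlierM m y t =
      ∑ k ∈ Finset.range N, (m.choose k : ℝ) * (-t) ^ (m - k) * ∏ i ∈ Finset.range k, (y - i) := by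
  unfold charlierM
  refine Finset.sum_subset (by intro a ha; simp at *; omega) ?_
  intro k hk hk2
  simp only [Finset.mem_range, not_lt] at hk2
  rw [Nat.choose_eq_zero_of_lt (by omega)]
  norm_num

lemma shift_aux (a P : ℕ → ℝ) (N : ℕ) (htop : a N = 0) :
    ∑ k ∈ Finset.range (N + 1), a k * P (k + 1)
      = ∑ k ∈ Finset.range (N + 1), (if k = 0 then 0 else a (k - 1)) * P k := by
  rw [Finset.sum_range_succ, htop, Finset.sum_range_succ' (fun k => (if k = 0 then 0 else a (k - 1)) * P k) N]
  simp

/-- Three-term recurrence for monic Charlier polynomials. -/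
lemma charlier_rec (y t : ℝ) (n : ℕ) :
    y * charlierM n y t =
      charlierM (n + 1) y t + ((n : ℝ) + t) * charlierM n y t
        + (n : ℝ) * t * charlierM (n - 1) y t := by
  set P : ℕ → ℝ := fun k => ∏ i ∈ Finset.range k, (y - i) with hPdef
  have hP : ∀ k : ℕ, y * P k = P (k + 1) + k * P k := by
    intro k
    have : P (k + 1) = P k * (y - k) := Finset.prod_range_succ _ k
    rw [this]; ring
  have e0 : charlierM n y t = ∑ k ∈ Finset.range (n + 2), (n.choose k : ℝ) * (-t) ^ (n - k) * P k :=
    charlier_ext y t n (n + 2) (by omega)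
  have e1 : charlierM (n + 1) y t
      = ∑ k ∈ Finset.range (n + 2), ((n + 1).choose k : ℝ) * (-t) ^ (n + 1 - k) * P k :=
    charlier_ext y t (n + 1) (n + 2) (by omega)
  have e2 : charlierM (n - 1) y t
      = ∑ k ∈ Finset.range (n + 2), ((n - 1).choose k : ℝ) * (-t) ^ (n - 1 - k) * P k :=
    charlier_ext y t (n - 1) (n + 2) (by omega)
  have lhs1 : y * charlierM n y t
      = ∑ k ∈ Finset.range (n + 2), ((n.choose k : ℝ) * (-t) ^ (n - k) * P (k + 1)
          + (k : ℝ) * ((n.choose k : ℝ) * (-t) ^ (n - k)) * P k) := by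
    rw [e0, Finset.mul_sum]
    refine Finset.sum_congr rfl fun k _ => ?_
    linear_combination ((n.choose k : ℝ) * (-t) ^ (n - k)) * hP k
  have lhs2 : ∑ k ∈ Finset.range (n + 2), (n.choose k : ℝ) * (-t) ^ (n - k) * P (k + 1)
      = ∑ k ∈ Finset.range (n + 2),
          (if k = 0 then 0 else (n.choose (k - 1) : ℝ) * (-t) ^ (n - (k - 1))) * P k := by
    refine shift_aux (fun k => (n.choose k : ℝ) * (-t) ^ (n - k)) P (n + 1) ?_
    simp [Nat.choose_succ_self]
  rw [lhs1, Finset.sum_add_distrib, lhs2, e1, e0, e2, Finset.mul_sum, Finset.mul_sum,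
    ← Finset.sum_add_distrib, ← Finset.sum_add_distrib, ← Finset.sum_add_distrib]
  refine Finset.sum_congr rfl fun k hk => ?_
  simp only [Finset.mem_range] at hk
  rcases Nat.eq_zero_or_pos k with rfl | hkpos
  · -- k = 0
    rw [if_pos rfl]
    simp only [Nat.choose_zero_right, Nat.cast_one]
    rcases Nat.eq_zero_or_pos n with rfl | hn
    · norm_num
    · obtain ⟨e, rfl⟩ : ∃ e, n = e + 1 := ⟨n - 1, by omega⟩
      have h1 : e + 1 - 0 = e + 1 := by omega
      have h2 : e + 1 + 1 - 0 = e + 2 := by omega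
      have h3 : e + 1 - 1 - 0 = e := by omega
      rw [h1, h2, h3]
      push_cast
      ring
  · obtain ⟨m, rfl⟩ : ∃ m, k = m + 1 := ⟨k - 1, by omega⟩
    rw [if_neg (Nat.succ_ne_zero m)]
    simp only [Nat.add_sub_cancel]
    have hm : m ≤ n := by omega
    rcases Nat.lt_or_ge (m + 1) n with hlt | hge
    · -- m + 2 ≤ n
      obtain ⟨e, rfl⟩ : ∃ e, n = m + 2 + e := ⟨n - m - 2, by omega⟩
      have h1 : m + 2 + e - m = e + 2 := by omega
      have h2 : m + 2 + e - (m + 1) = e + 1 := by omega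
      have h3 : m + 2 + e + 1 - (m + 1) = e + 2 := by omega
      have h4 : m + 2 + e - 1 - (m + 1) = e := by omega
      rw [h1, h2, h3, h4]
      have hpascal : ((m + 2 + e + 1).choose (m + 1) : ℝ)
          = ((m + 2 + e).choose m : ℝ) + ((m + 2 + e).choose (m + 1) : ℝ) := by
        exact_mod_cast congrArg (fun z : ℕ => (z : ℝ)) (Nat.choose_succ_succ (m + 2 + e) m)
      have hid := choose_id (m + 2 + e) m (by omega)
      have hcast : (((m + 2 + e : ℕ)) : ℝ) = (m : ℝ) + 2 + e := by push_cast; ring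
      rw [hpascal]
      rw [hcast] at hid
      push_cast
      linear_combination (P (m + 1) * t * (-t) ^ e) * hid
    · rcases Nat.eq_or_lt_of_le hge with heq | hgt
      · -- n = m + 1
        subst heq
        have h1 : m + 1 - m = 1 := by omega
        have h2 : m + 1 - (m + 1) = 0 := by omega
        have h3 : m + 1 + 1 - (m + 1) = 1 := by omega
        have h4 : m + 1 - 1 - (m + 1) = 0 := by omega
        rw [h1, h2, h3, h4]
        have c1 : (m + 1).choose m = m + 1 := Nat.choose_succ_self_right m
        have c2 : (m + 1).choose (m + 1) = 1 := Nat.choose_self (m + 1)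
        have c3 : ((m + 1 + 1).choose (m + 1) : ℝ) = (m : ℝ) + 2 := by
          rw [Nat.choose_succ_self_right (m + 1)]; push_cast; ring
        have c4 : (m + 1 - 1).choose (m + 1) = 0 := by
          apply Nat.choose_eq_zero_of_lt; omega
        rw [c1, c2, c3, c4]
        push_cast
        ring
      · -- n ≤ m, so m = n
        have hmn : m = n := by omega
        have c1 : (n.choose (m + 1) : ℝ) = 0 := by
          rw [Nat.choose_eq_zero_of_lt (by omega)]; norm_num
        have c2 : ((n - 1).choose (m + 1) : ℝ) = 0 := by
          rw [Nat.choose_eq_zero_of_lt (by omega)]; norm_num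
        have c3 : ((n + 1).choose (m + 1) : ℝ) = 1 := by
          rw [hmn, Nat.choose_self]; norm_num
        have c4 : (n.choose m : ℝ) = 1 := by
          rw [hmn, Nat.choose_self]; norm_num
        have h1 : n - m = 0 := by omega
        have h2 : n + 1 - (m + 1) = 0 := by omega
        rw [h1, h2, c1, c2, c3, c4]
        push_cast
        ring


lemma lam_eq (k : ℕ) : ∀ n, 1 ≤ n → lam (k + 1) n = ((k + 1).factorial : ℝ) * stirS n (k + 1) := by
  induction k with
  | zero =>
      intro n hn
      obtain ⟨n', rfl⟩ : ∃ n', n = n' + 1 := ⟨n - 1, by omega⟩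
      rw [lam, stirS_one]
      simp [Nat.factorial]
  | succ k ih =>
      intro n hn
      rw [lam]
      have h1 : ∀ j ∈ Finset.Icc (k + 1) (n - 1),
          (n.choose j : ℝ) * lam (k + 1) j
            = (n.choose j : ℝ) * (((k + 1).factorial : ℝ) * stirS j (k + 1)) := fun j hj => by
        have : 1 ≤ j := by simp only [Finset.mem_Icc] at hj; omega
        rw [ih j this]
      rw [Finset.sum_congr rfl h1]
      have h2 : ∑ j ∈ Finset.Icc (k + 1) (n - 1),
            (n.choose j : ℝ) * (((k + 1).factorial : ℝ) * stirS j (k + 1))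
          = ((k + 1).factorial : ℝ)
            * ∑ j ∈ Finset.Icc (k + 1) (n - 1), (n.choose j : ℝ) * stirS j (k + 1) := by
        rw [Finset.mul_sum]; exact Finset.sum_congr rfl fun j _ => by ring
      have h3 : ∑ j ∈ Finset.Icc (k + 1) (n - 1), (n.choose j : ℝ) * stirS j (k + 1)
          = ∑ j ∈ Finset.range n, (n.choose j : ℝ) * stirS j (k + 1) := by
        refine Finset.sum_subset ?_ ?_
        · intro a ha; simp only [Finset.mem_Icc] at ha; simp only [Finset.mem_range]; omega
        · intro j hj hj2
          simp only [Finset.mem_range] at hj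
          simp only [Finset.mem_Icc, not_and, not_le] at hj2
          rw [stirS_eq_zero_of_lt (by omega)]; ring
      have h4 : ∑ j ∈ Finset.range n, (n.choose j : ℝ) * stirS j (k + 1)
          = ((k : ℝ) + 2) * stirS n (k + 2) := by
        have hb := stirS_binom n (k + 1)
        rw [Finset.sum_range_succ, Nat.choose_self, stirS_succ] at hb
        push_cast at hb ⊢
        linarith [hb]
      rw [h2, h3, h4, Nat.factorial_succ (k + 1)]
      push_cast; ring

lemma key_step (x t : ℝ) (n : ℕ) :
    ∑ m ∈ Finset.range (n + 2), stirS (n + 1) m * charlierM m (x + t) t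
      = x * (∑ j ∈ Finset.range (n + 1), stirS n j * charlierM j (x + t) t)
        + ∑ j ∈ Finset.range n,
            (n.choose j : ℝ) * (∑ m ∈ Finset.range (j + 1), stirS j m * charlierM m (x + t) t)
              * (-t) := by
  set C : ℕ → ℝ := fun m => charlierM m (x + t) t with hC
  have hCC : ∀ m, charlierM m (x + t) t = C m := fun m => rfl
  simp only [hCC]
  have hxC : ∀ j : ℕ, x * C j = C (j + 1) + (j : ℝ) * C j + (j : ℝ) * t * C (j - 1) := by
    intro j
    have h := charlier_rec (x + t) t j
    simp only [hC]
    linear_combination h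
  set A : ℝ := ∑ j ∈ Finset.range (n + 1), stirS n j * C (j + 1) with hA
  set T2 : ℝ := ∑ j ∈ Finset.range (n + 1), ((j : ℝ) + 1) * stirS n (j + 1) * C (j + 1) with hT2
  set U : ℝ := ∑ j ∈ Finset.range (n + 1), ((j : ℝ) + 1) * stirS n (j + 1) * C j with hU
  have h_lhs : ∑ m ∈ Finset.range (n + 2), stirS (n + 1) m * C m = A + T2 := by
    rw [Finset.sum_range_succ' (fun m => stirS (n + 1) m * C m) (n + 1), stirS_zr]
    have hterm : ∀ m ∈ Finset.range (n + 1), stirS (n + 1) (m + 1) * C (m + 1)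
        = stirS n m * C (m + 1) + ((m : ℝ) + 1) * stirS n (m + 1) * C (m + 1) := fun m _ => by
      rw [stirS_succ]; push_cast; ring
    rw [Finset.sum_congr rfl hterm, Finset.sum_add_distrib, hA, hT2]
    ring
  have sub1 : ∑ j ∈ Finset.range (n + 1), stirS n j * ((j : ℝ) * C j) = T2 := by
    rw [Finset.sum_range_succ' (fun j => stirS n j * ((j : ℝ) * C j)) n, hT2,
      Finset.sum_range_succ, stirS_eq_zero_of_lt (Nat.lt_succ_self n)]
    have hterm : ∀ j ∈ Finset.range n, stirS n (j + 1) * (((j + 1 : ℕ) : ℝ) * C (j + 1))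
        = ((j : ℝ) + 1) * stirS n (j + 1) * C (j + 1) := fun j _ => by push_cast; ring
    rw [Finset.sum_congr rfl hterm]
    push_cast; ring
  have sub2 : ∑ j ∈ Finset.range (n + 1), stirS n j * ((j : ℝ) * t * C (j - 1)) = t * U := by
    rw [Finset.sum_range_succ' (fun j => stirS n j * ((j : ℝ) * t * C (j - 1))) n, hU,
      Finset.sum_range_succ, stirS_eq_zero_of_lt (Nat.lt_succ_self n)]
    simp only [Nat.cast_zero, mul_zero, zero_mul, add_zero]
    rw [Finset.mul_sum]
    have hterm : ∀ j ∈ Finset.range n, stirS n (j + 1) * (((j + 1 : ℕ) : ℝ) * t * C (j + 1 - 1))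
        = t * (((j : ℝ) + 1) * stirS n (j + 1) * C j) := fun j _ => by
      simp only [Nat.add_sub_cancel]; push_cast; ring
    rw [Finset.sum_congr rfl hterm]
  have h_x : x * (∑ j ∈ Finset.range (n + 1), stirS n j * C j) = A + T2 + t * U := by
    rw [Finset.mul_sum]
    have hterm : ∀ j ∈ Finset.range (n + 1), x * (stirS n j * C j)
        = stirS n j * C (j + 1) + stirS n j * ((j : ℝ) * C j)
          + stirS n j * ((j : ℝ) * t * C (j - 1)) := fun j _ => by
      linear_combination (stirS n j) * hxC j
    rw [Finset.sum_congr rfl hterm, Finset.sum_add_distrib, Finset.sum_add_distrib, sub1, sub2, hA]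
  have h_neg : ∑ j ∈ Finset.range n,
        (n.choose j : ℝ) * (∑ m ∈ Finset.range (j + 1), stirS j m * C m) * (-t) = -t * U := by
    have hext : ∀ j ∈ Finset.range n,
        (n.choose j : ℝ) * (∑ m ∈ Finset.range (j + 1), stirS j m * C m) * (-t)
          = ∑ m ∈ Finset.range (n + 1), (n.choose j : ℝ) * stirS j m * C m * (-t) := by
      intro j hj
      simp only [Finset.mem_range] at hj
      have hsub : ∑ m ∈ Finset.range (j + 1), stirS j m * C m
          = ∑ m ∈ Finset.range (n + 1), stirS j m * C m := by
        refine Finset.sum_subset ?_ ?_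
        · intro a ha; simp only [Finset.mem_range] at ha ⊢; omega
        · intro m hm hm2
          simp only [Finset.mem_range, not_lt] at hm2
          rw [stirS_eq_zero_of_lt (by omega)]; ring
      rw [hsub, Finset.mul_sum, Finset.sum_mul]
      exact Finset.sum_congr rfl fun m _ => by ring
    rw [Finset.sum_congr rfl hext, Finset.sum_comm, hU, Finset.mul_sum]
    refine Finset.sum_congr rfl fun m _ => ?_
    have hb : ∑ j ∈ Finset.range n, (n.choose j : ℝ) * stirS j m
        = ((m : ℝ) + 1) * stirS n (m + 1) := by
      have h := stirS_binom n m
      rw [Finset.sum_range_succ, Nat.choose_self, stirS_succ] at h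
      push_cast at h ⊢
      linarith
    have hterm : ∀ j ∈ Finset.range n, (n.choose j : ℝ) * stirS j m * C m * (-t)
        = ((n.choose j : ℝ) * stirS j m) * (C m * (-t)) := fun j _ => by ring
    rw [Finset.sum_congr rfl hterm, ← Finset.sum_mul, hb]
    ring
  rw [h_lhs, h_x, h_neg]
  ring

lemma bell_eq (x t : ℝ) (n : ℕ) :
    bellΓ (fun k => if k = 1 then x else -t) n
      = ∑ j ∈ Finset.range (n + 1), stirS n j * charlierM j (x + t) t := by
  induction n using Nat.strong_induction_on with
  | _ n ih =>
    rcases n with _ | n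
    · rw [bellΓ, Finset.sum_range_one, stirS_00]
      unfold charlierM
      simp
    · have h0 : bellΓ (fun k => if k = 1 then x else -t) (n + 1)
          = ∑ j ∈ Finset.range (n + 1), (n.choose j : ℝ)
              * bellΓ (fun k => if k = 1 then x else -t) j
              * (fun k => if k = 1 then x else -t) (n + 1 - j) := by
        rw [bellΓ]
        exact Finset.sum_attach (Finset.range (n + 1))
          (fun j => (n.choose j : ℝ) * bellΓ (fun k => if k = 1 then x else -t) j
            * (fun k => if k = 1 then x else -t) (n + 1 - j))
      rw [h0]
      have h1 : ∀ j ∈ Finset.range (n + 1),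
          (n.choose j : ℝ) * bellΓ (fun k => if k = 1 then x else -t) j
              * (fun k => if k = 1 then x else -t) (n + 1 - j)
            = (n.choose j : ℝ) * (∑ m ∈ Finset.range (j + 1), stirS j m * charlierM m (x + t) t)
              * (fun k => if k = 1 then x else -t) (n + 1 - j) := fun j hj => by
        rw [ih j (Finset.mem_range.mp hj)]
      rw [Finset.sum_congr rfl h1, Finset.sum_range_succ]
      have h2 : ∀ j ∈ Finset.range n,
          (n.choose j : ℝ) * (∑ m ∈ Finset.range (j + 1), stirS j m * charlierM m (x + t) t)
              * (fun k => if k = 1 then x else -t) (n + 1 - j)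
            = (n.choose j : ℝ) * (∑ m ∈ Finset.range (j + 1), stirS j m * charlierM m (x + t) t)
              * (-t) := by
        intro j hj
        simp only [Finset.mem_range] at hj
        have : n + 1 - j ≠ 1 := by omega
        simp only [if_neg this]
      have h3 : n + 1 - n = 1 := by omega
      rw [Finset.sum_congr rfl h2, h3]
      simp only [eq_self_iff_true, if_true, Nat.choose_self, Nat.cast_one]
      rw [key_step x t n]
      ring

/-- The Poisson time–space harmonic polynomials `Γ_n(x,-t,…,-t)` expand in the
(shifted, normalized) monic Charlier polynomials with coefficients `λ_j^{(n)}`. -/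
theorem bell_poisson_charlier_expansion (x t : ℝ) (n : ℕ) (hn : 1 ≤ n) :
    bellΓ (fun k => if k = 1 then x else -t) n =
      ∑ j ∈ Finset.Icc 1 n, lam j n * ((1 : ℝ) / j.factorial) * charlierM j (x + t) t := by
  rw [bell_eq x t n]
  obtain ⟨n', rfl⟩ : ∃ n', n = n' + 1 := ⟨n - 1, by omega⟩
  rw [Finset.sum_range_succ'
    (fun j => stirS (n' + 1) j * charlierM j (x + t) t) (n' + 1), stirS_zr]
  rw [← Finset.Ico_add_one_right_eq_Icc, Finset.sum_Ico_eq_sum_range]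
  have hr : n' + 1 + 1 - 1 = n' + 1 := by omega
  rw [hr]
  have hterm : ∀ i ∈ Finset.range (n' + 1),
      lam (1 + i) (n' + 1) * ((1 : ℝ) / (1 + i).factorial) * charlierM (1 + i) (x + t) t
        = stirS (n' + 1) (i + 1) * charlierM (i + 1) (x + t) t := by
    intro i _
    have hcomm : 1 + i = i + 1 := by omega
    rw [hcomm, lam_eq i (n' + 1) (by omega)]
    have hfac : (((i + 1).factorial : ℕ) : ℝ) ≠ 0 :=
      Nat.cast_ne_zero.mpr (Nat.factorial_ne_zero (i + 1))
    field_simp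
  rw [Finset.sum_congr rfl hterm]
  ring
end
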